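/- Let 2 ≤ g₁ < g₂ < … < g_e be coprime positive integers forming a minimal generating system of the numerical semigroup S = ⟨g₁,…,g_e⟩, let F be its Frobenius number, n = |S ∩ [0, F]|, and q = ⌈(F+1)/g₁⌉. Then F + 1 ≤ q·e·n. -/
import Mathlib

/-- **Theorem 1(1).**
Let `2 ≤ g₁ < g₂ < … < g_e` be coprime positive integers forming a minimal generating
system of the numerical semigroup `S = ⟨g₁,…,g_e⟩`, let `F = max (ℤ \ S)` be the
Frobenius number, `n = |S ∩ [0, F]|` and `q = ⌈(F+1)/g₁⌉`.  Then `F + 1 ≤ q·e·n`. -/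
theorem wilf_bound_q
    (e : ℕ) (he : 2 ≤ e) (g : Fin e → ℤ)
    (hg2 : 2 ≤ g ⟨0, by omega⟩)
    (hmono : StrictMono g)
    (hcop : Finset.univ.gcd g = 1)
    (S : Set ℤ)
    (hS : S = {x : ℤ | ∃ a : Fin e → ℕ, x = ∑ i, (a i : ℤ) * g i})
    (hmingen : ∀ i : Fin e, ¬∃ a : Fin e → ℕ, a i = 0 ∧ g i = ∑ j, (a j : ℤ) * g j)
    (F : ℤ) (hF : F ∉ S) (hFmax : ∀ x : ℤ, x ∉ S → x ≤ F)
    (n : ℕ) (hn : n = (S ∩ Set.Icc 0 F).ncard)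
    (q : ℤ) (hq : q = ⌈((F : ℚ) + 1) / ((g ⟨0, by omega⟩ : ℤ) : ℚ)⌉) :
    F + 1 ≤ q * e * n := by
  classical
  set i0 : Fin e := ⟨0, by omega⟩ with hi0
  set m : ℤ := g i0 with hmdef
  have hm : 2 ≤ m := hg2
  have hge : ∀ i : Fin e, m ≤ g i := by
    intro i
    exact hmono.monotone (by exact Fin.mk_le_of_le_val (Nat.zero_le _))
  have hgpos : ∀ i : Fin e, 0 < g i := fun i => lt_of_lt_of_le (by omega) (hge i)
  -- every element of S is nonnegative
  have hSnonneg : ∀ x ∈ S, 0 ≤ x := by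
    intro x hx
    rw [hS] at hx
    obtain ⟨a, rfl⟩ := hx
    apply Finset.sum_nonneg
    intro i _
    exact mul_nonneg (Int.natCast_nonneg _) (hgpos i).le
  have h0S : (0 : ℤ) ∈ S := by
    rw [hS]; exact ⟨fun _ => 0, by simp⟩
  -- 1 is not in S, so F ≥ 1
  have h1S : (1 : ℤ) ∉ S := by
    rw [hS]
    rintro ⟨a, ha⟩
    by_cases hz : ∀ i, a i = 0
    · simp only [hz, Nat.cast_zero, zero_mul, Finset.sum_const_zero] at ha
      omega
    · push_neg at hz
      obtain ⟨i, hi⟩ := hz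
      have h2 : (2 : ℤ) ≤ (a i : ℤ) * g i := by
        have : (1 : ℤ) ≤ (a i : ℤ) := by exact_mod_cast Nat.one_le_iff_ne_zero.mpr hi
        nlinarith [hge i, (hgpos i).le]
      have h3 : (a i : ℤ) * g i ≤ ∑ j, (a j : ℤ) * g j := by
        apply Finset.single_le_sum (f := fun j => (a j : ℤ) * g j) _ (Finset.mem_univ i)
        intro j _
        exact mul_nonneg (Int.natCast_nonneg _) (hgpos j).le
      omega
  have hF1 : 1 ≤ F := hFmax 1 h1S
  have hbig : ∀ x : ℤ, F < x → x ∈ S := by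
    intro x hx
    by_contra h
    exact absurd (hFmax x h) (by omega)
  -- key existence: each residue r ∈ [0, m) comes from a pair (u, i) with u a small element
  have H : ∀ r : ℤ, ∃ p : ℤ × Fin e, r ∈ Set.Ico 0 m →
      (p.1 ∈ S ∩ Set.Icc 0 F ∧ (p.1 + g p.2) % m = r) := by
    intro r
    by_cases hr : r ∈ Set.Ico 0 m
    · obtain ⟨hr0, hrm⟩ := hr
      by_cases hr00 : r = 0
      · refine ⟨((0 : ℤ), i0), fun _ => ⟨⟨h0S, by constructor <;> omega⟩, ?_⟩⟩
        simp only [zero_add]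
        rw [hr00, ← hmdef, Int.emod_self]
      · -- find the minimal element of S congruent to r mod m
        have hm0 : m ≠ 0 := by omega
        have hmodnn : 0 ≤ (r - F - 1) % m := Int.emod_nonneg _ hm0
        have hxpos : 0 ≤ F + 1 + ((r - F - 1) % m) := by omega
        have hPex : ∃ k : ℕ, ((k : ℤ) ∈ S ∧ (k : ℤ) % m = r) := by
          refine ⟨(F + 1 + ((r - F - 1) % m)).toNat, ?_, ?_⟩
          · rw [Int.toNat_of_nonneg hxpos]
            exact hbig _ (by omega)
          · rw [Int.toNat_of_nonneg hxpos]
            have h1 : (F + 1 + (r - F - 1) % m) % m = (F + 1 + (r - F - 1)) % m := by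
              conv_lhs => rw [Int.add_emod]
              conv_rhs => rw [Int.add_emod]
              rw [Int.emod_emod_of_dvd _ dvd_rfl]
            rw [h1, show F + 1 + (r - F - 1) = r by ring, Int.emod_eq_of_lt hr0 hrm]
        set k : ℕ := Nat.find hPex with hkdef
        obtain ⟨hkS, hkr⟩ := Nat.find_spec hPex
        set w : ℤ := (k : ℤ) with hw
        -- w - m is not in S
        have hwm : w - m ∉ S := by
          intro hc
          have hnn : 0 ≤ w - m := hSnonneg _ hc
          have hlt : (w - m).toNat < Nat.find hPex := by omega
          have := Nat.find_min hPex hlt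
          apply this
          constructor
          · rwa [Int.toNat_of_nonneg hnn]
          · rw [Int.toNat_of_nonneg hnn,
              show w - m = w + m * (-1) by ring, Int.add_mul_emod_self_left]
            exact hkr
        have hwF : w ≤ F + m := by
          have := hFmax _ hwm; omega
        -- w is a positive element of S; write w = u + g i
        have hwS' := hkS
        rw [hS] at hwS'
        obtain ⟨a, ha⟩ := hwS'
        have hz : ∃ i, a i ≠ 0 := by
          by_contra hc
          push_neg at hc
          simp only [hc, Nat.cast_zero, zero_mul, Finset.sum_const_zero] at ha
          rw [ha] at hkr
          simp only [Int.zero_emod] at hkr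
          exact hr00 hkr.symm
        obtain ⟨i, hi⟩ := hz
        refine ⟨(w - g i, i), fun _ => ⟨⟨?_, ?_⟩, ?_⟩⟩
        · -- w - g i ∈ S
          rw [hS]
          refine ⟨Function.update a i (a i - 1), ?_⟩
          have hsum : ∀ j : Fin e, (a j : ℤ) * g j =
              ((Function.update a i (a i - 1) j : ℤ)) * g j + (if j = i then g i else 0) := by
            intro j
            by_cases hji : j = i
            · subst hji
              rw [Function.update_self, if_pos rfl]
              have : (1 : ℕ) ≤ a j := Nat.one_le_iff_ne_zero.mpr hi
              push_cast [Nat.cast_sub this]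
              ring
            · rw [Function.update_of_ne hji, if_neg hji, add_zero]
          calc w - g i = (∑ j, (a j : ℤ) * g j) - g i := by rw [← ha]
            _ = (∑ j, (((Function.update a i (a i - 1) j : ℤ)) * g j
                  + (if j = i then g i else 0))) - g i := by
                  congr 1; exact Finset.sum_congr rfl (fun j _ => hsum j)
            _ = ∑ j, ((Function.update a i (a i - 1) j : ℤ)) * g j := by
                  rw [Finset.sum_add_distrib, Finset.sum_ite_eq' Finset.univ i (fun _ => g i)]
                  simp
        · constructor
          · -- 0 ≤ w - g i : it is in S... use hSnonneg after membership? use direct bound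
            have h3 : (a i : ℤ) * g i ≤ ∑ j, (a j : ℤ) * g j := by
              apply Finset.single_le_sum (f := fun j => (a j : ℤ) * g j) _ (Finset.mem_univ i)
              intro j _
              exact mul_nonneg (Int.natCast_nonneg _) (hgpos j).le
            have : (1 : ℤ) ≤ (a i : ℤ) := by exact_mod_cast Nat.one_le_iff_ne_zero.mpr hi
            have h4 : g i ≤ (a i : ℤ) * g i := le_mul_of_one_le_left (hgpos i).le this
            omega
          · have := hge i; omega
        · rw [sub_add_cancel]
          exact hkr
    · exact ⟨(0, i0), fun hc => absurd hc hr⟩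
  choose f hf using H
  -- counting: injection from Ico 0 m into (S ∩ Icc 0 F) ×ˢ univ
  have hNfin : (S ∩ Set.Icc 0 F).Finite := (Set.finite_Icc 0 F).inter_of_right S
  have hBfin : ((S ∩ Set.Icc 0 F) ×ˢ (Set.univ : Set (Fin e))).Finite :=
    hNfin.prod Set.finite_univ
  have hcard : (Set.Ico (0:ℤ) m).ncard ≤
      ((S ∩ Set.Icc 0 F) ×ˢ (Set.univ : Set (Fin e))).ncard := by
    refine Set.ncard_le_ncard_of_injOn f ?_ ?_ hBfin
    · intro r hr
      exact Set.mk_mem_prod ((hf r hr).1) (Set.mem_univ _)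
    · intro r hr r' hr' hEq
      have h1 := (hf r hr).2
      have h2 := (hf r' hr').2
      rw [hEq] at h1
      rw [h1] at h2
      exact h2
  have hIco : (Set.Ico (0:ℤ) m).ncard = m.toNat := by
    rw [← Finset.coe_Ico, Set.ncard_coe_finset, Int.card_Ico]
    simp
  have hprod : ((S ∩ Set.Icc 0 F) ×ˢ (Set.univ : Set (Fin e))).ncard = n * e := by
    rw [← Nat.card_coe_set_eq, Nat.card_congr (Equiv.Set.prod _ _), Nat.card_prod,
      Nat.card_coe_set_eq, Nat.card_coe_set_eq, Set.ncard_univ, Nat.card_eq_fintype_card,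
      Fintype.card_fin, hn]
  have hmen : m ≤ (e : ℤ) * n := by
    rw [hIco, hprod] at hcard
    have h1 : ((m.toNat : ℕ) : ℤ) ≤ ((n * e : ℕ) : ℤ) := Int.ofNat_le.mpr hcard
    have h2 : ((n * e : ℕ) : ℤ) = (e : ℤ) * n := by push_cast; ring
    have h3 : ((m.toNat : ℕ) : ℤ) = m := Int.toNat_of_nonneg (by omega)
    rw [h2, h3] at h1
    exact h1
  -- ceiling facts
  have hmQ : (0 : ℚ) < (m : ℚ) := by exact_mod_cast (by omega : (0:ℤ) < m)
  have hceil : ((F : ℚ) + 1) / (m : ℚ) ≤ (q : ℚ) := by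
    rw [hq]; exact_mod_cast Int.le_ceil _
  have hqm : F + 1 ≤ q * m := by
    have h1 : ((F : ℚ) + 1) ≤ (q : ℚ) * (m : ℚ) := by
      rw [div_le_iff₀ hmQ] at hceil
      exact hceil
    exact_mod_cast h1
  have hq1 : 1 ≤ q := by
    rw [hq]
    have : (0 : ℚ) < ((F : ℚ) + 1) / (m : ℚ) := by
      apply div_pos _ hmQ
      have : (1 : ℚ) ≤ (F : ℚ) := by exact_mod_cast hF1
      linarith
    have := Int.ceil_pos.mpr this
    omega
  calc F + 1 ≤ q * m := hqm
    _ ≤ q * ((e : ℤ) * n) := by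
        apply mul_le_mul_of_nonneg_left hmen (by omega)
    _ = q * e * n := by ring
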